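/- For a finite simple graph G admitting a weak IASI, the minimum number of mono-indexed vertices, taken over all weak IASIs of G, equals the vertex covering number β(G) of G. -/

import Mathlib

open Pointwise

/-- The induced set-label on unordered pairs: the sumset of the two vertex labels. -/
def edgeLabel {V : Type*} (f : V → Finset ℕ) : Sym2 V → Finset ℕ :=
  Sym2.lift ⟨fun u v => f u + f v, fun u v => add_comm (f u) (f v)⟩

/-- `f` is a weak integer additive set-indexer of `G`. -/
structure IsWeakIASI {V : Type*} (G : SimpleGraph V) (f : V → Finset ℕ) : Prop where
  nonempty : ∀ v, (f v).Nonempty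
  injective : Function.Injective f
  edgeInjective : Set.InjOn (edgeLabel f) G.edgeSet
  weak : ∀ u v, G.Adj u v → (edgeLabel f s(u, v)).card = max (f u).card (f v).card

/-- The number of mono-indexed edges of `G` under the labeling `f`. -/
noncomputable def monoEdgeCount {V : Type*} (G : SimpleGraph V) (f : V → Finset ℕ) : ℕ :=
  {e ∈ G.edgeSet | (edgeLabel f e).card = 1}.ncard

/-- The sparing number: the minimum number of mono-indexed edges over all weak IASIs. -/
noncomputable def sparingNumber {V : Type*} (G : SimpleGraph V) : ℕ :=
  sInf {n | ∃ f, IsWeakIASI G f ∧ monoEdgeCount G f = n}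

/-- The number of mono-indexed vertices under the labeling `f`. -/
noncomputable def monoVertexCount {V : Type*} (f : V → Finset ℕ) : ℕ :=
  {v | (f v).card = 1}.ncard

/-- `S` is a vertex cover of `G`: every edge has at least one end vertex in `S`. -/
def IsVertexCover {V : Type*} (G : SimpleGraph V) (S : Set V) : Prop :=
  ∀ ⦃u v⦄, G.Adj u v → u ∈ S ∨ v ∈ S

/-- The vertex covering number of `G`. -/
noncomputable def coverNumber {V : Type*} (G : SimpleGraph V) : ℕ :=
  sInf {n | ∃ S : Set V, IsVertexCover G S ∧ S.ncard = n}

/-- The independence number of `G`. -/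
noncomputable def indepNumber {V : Type*} (G : SimpleGraph V) : ℕ :=
  sSup {n | ∃ S : Set V, (∀ u ∈ S, ∀ v ∈ S, ¬ G.Adj u v) ∧ S.ncard = n}

lemma aux_card_lt_card_add {A B : Finset ℕ} (hA : A.Nonempty) (hB : 2 ≤ B.card) :
    A.card < (A + B).card := by
  have hBne : B.Nonempty := by rw [← Finset.card_pos]; omega
  obtain ⟨b, hb, hbne⟩ := Finset.exists_mem_ne (Nat.lt_of_lt_of_le Nat.one_lt_two hB) (B.min' hBne)
  have hblt : B.min' hBne < b := lt_of_le_of_ne (Finset.min'_le _ _ hb) (Ne.symm hbne)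
  set T : Finset ℕ := insert (A.max' hA + b) (A.image (· + B.min' hBne)) with hT
  have hsub : T ⊆ A + B := by
    intro x hx
    rw [hT, Finset.mem_insert] at hx
    rcases hx with rfl | hx
    · exact Finset.add_mem_add (A.max'_mem hA) hb
    · obtain ⟨a, ha, rfl⟩ := Finset.mem_image.mp hx
      exact Finset.add_mem_add ha (B.min'_mem hBne)
  have hnot : A.max' hA + b ∉ A.image (· + B.min' hBne) := by
    intro hmem
    obtain ⟨a, ha, hax⟩ := Finset.mem_image.mp hmem
    have : a + B.min' hBne < A.max' hA + b :=
      add_lt_add_of_le_of_lt (A.le_max' a ha) hblt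
    omega
  have hcardT : T.card = A.card + 1 := by
    rw [hT, Finset.card_insert_of_notMem hnot,
      Finset.card_image_of_injective _ (add_left_injective _)]
  calc A.card < T.card := by omega
    _ ≤ (A + B).card := Finset.card_le_card hsub

lemma aux_pow_pair_ord {a b c d : ℕ} (hab : a < b) (hcd : c < d)
    (h : 5 ^ a + 5 ^ b = 5 ^ c + 5 ^ d) : a = c ∧ b = d := by
  have key : ∀ {a b c d : ℕ}, a < b → c < d → 5 ^ a + 5 ^ b = 5 ^ c + 5 ^ d → ¬ a < c := by
    intro a b c d hab hcd h hac
    have h1 : 5 ^ (a + 1) ∣ 5 ^ b := pow_dvd_pow 5 (by omega)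
    have h2 : 5 ^ (a + 1) ∣ 5 ^ c := pow_dvd_pow 5 (by omega)
    have h3 : 5 ^ (a + 1) ∣ 5 ^ d := pow_dvd_pow 5 (by omega)
    have h4 : 5 ^ (a + 1) ∣ 5 ^ a + 5 ^ b := h ▸ Dvd.dvd.add h2 h3
    have h5 : 5 ^ (a + 1) ∣ 5 ^ a := (Nat.dvd_add_right h1).mp (by rw [Nat.add_comm (5 ^ b) (5 ^ a)]; exact h4)
    have := Nat.le_of_dvd (Nat.pow_pos (n := a) (by norm_num)) h5
    have : (5:ℕ) ^ a < 5 ^ (a + 1) := Nat.pow_lt_pow_right (by norm_num) (by omega)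
    omega
  have hac : a = c := by
    rcases lt_trichotomy a c with h' | h' | h'
    · exact absurd h' (key hab hcd h)
    · exact h'
    · exact absurd h' (key hcd hab h.symm)
  subst hac
  have : (5:ℕ) ^ b = 5 ^ d := by omega
  exact ⟨rfl, Nat.pow_right_injective (by norm_num) this⟩

lemma aux_pow_pair {a b c d : ℕ} (hab : a ≠ b) (hcd : c ≠ d)
    (h : 5 ^ a + 5 ^ b = 5 ^ c + 5 ^ d) : (a = c ∧ b = d) ∨ (a = d ∧ b = c) := by
  rcases hab.lt_or_gt with h1 | h1 <;> rcases hcd.lt_or_gt with h2 | h2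
  · exact Or.inl (aux_pow_pair_ord h1 h2 h)
  · exact Or.inr (aux_pow_pair_ord h1 h2 (by omega))
  · refine Or.inr ?_
    obtain ⟨x, y⟩ := aux_pow_pair_ord h1 h2 (by omega : 5 ^ b + 5 ^ a = 5 ^ c + 5 ^ d)
    exact ⟨y, x⟩
  · refine Or.inl ?_
    obtain ⟨x, y⟩ := aux_pow_pair_ord h1 h2 (by omega : 5 ^ b + 5 ^ a = 5 ^ d + 5 ^ c)
    exact ⟨y, x⟩

lemma aux_card_singleton_add (a : ℕ) (B : Finset ℕ) : ({a} + B).card = B.card := by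
  have h : ({a} : Finset ℕ) + B = B.image (a + ·) := by
    ext x
    simp only [Finset.mem_add, Finset.mem_singleton, Finset.mem_image]
    constructor
    · rintro ⟨y, rfl, z, hz, rfl⟩; exact ⟨z, hz, rfl⟩
    · rintro ⟨z, hz, rfl⟩; exact ⟨a, rfl, z, hz, rfl⟩
  rw [h, Finset.card_image_of_injective _ (add_right_injective a)]

/-- The minimum number of mono-indexed vertices in a weak IASI graph `G`, taken over all
weak IASIs of `G`, equals the covering number `β(G)`. -/
theorem min_monoVertices_eq_coverNumber {V : Type*} [Fintype V] (G : SimpleGraph V)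
    (hG : ∃ f, IsWeakIASI G f) :
    sInf {n | ∃ f, IsWeakIASI G f ∧ monoVertexCount f = n} = coverNumber G := by
  classical
  have hpow_inj : Function.Injective (fun k : ℕ => 5 ^ k) :=
    Nat.pow_right_injective (by norm_num)
  apply le_antisymm
  · -- exhibit a weak IASI whose mono vertices are exactly a minimum cover
    have hcov_mem : coverNumber G ∈ {n | ∃ S : Set V, IsVertexCover G S ∧ S.ncard = n} :=
      Nat.sInf_mem ⟨Fintype.card V, Set.univ, fun u v _ => Or.inl trivial, (Set.ncard_univ V).trans Nat.card_eq_fintype_card⟩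
    obtain ⟨S, hS, hScard⟩ := hcov_mem
    set idx : V → ℕ := fun v => ((Fintype.equivFin V) v : ℕ) with hidx
    have hidx_inj : Function.Injective idx := fun u v h =>
      (Fintype.equivFin V).injective (Fin.val_injective h)
    set f : V → Finset ℕ :=
      fun v => if v ∈ S then {5 ^ idx v} else {5 ^ idx v, 2 * 5 ^ idx v} with hf
    have hmem : ∀ v, 5 ^ idx v ∈ f v := by
      intro v; by_cases h : v ∈ S <;> simp [hf, h]
    have hsubchar : ∀ v, ∀ x ∈ f v, x = 5 ^ idx v ∨ x = 2 * 5 ^ idx v := by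
      intro v x hx; by_cases h : v ∈ S <;> simp [hf, h] at hx <;> tauto
    have hlb : ∀ v, ∀ x ∈ f v, 5 ^ idx v ≤ x := by
      intro v x hx; rcases hsubchar v x hx with rfl | rfl <;> omega
    have hmod : ∀ k : ℕ, 5 ^ k % 2 = 1 := by
      intro k; rw [Nat.pow_mod]; simp
    have hpos : ∀ k : ℕ, 0 < (5:ℕ) ^ k := fun k => Nat.pow_pos (n := k) (by norm_num)
    have hf_inj : Function.Injective f := by
      intro u v h
      have hm := hmem u
      rw [h] at hm
      rcases hsubchar v _ hm with h' | h'
      · exact hidx_inj (hpow_inj h')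
      · have h1 := hmod (idx u)
        have h2 := hmod (idx v)
        omega
    have hmin : ∀ u v : V, IsLeast (↑(f u + f v) : Set ℕ) (5 ^ idx u + 5 ^ idx v) := by
      intro u v
      constructor
      · exact Finset.mem_coe.mpr (Finset.add_mem_add (hmem u) (hmem v))
      · intro y hy
        obtain ⟨a, ha, b, hb, rfl⟩ := Finset.mem_add.mp (Finset.mem_coe.mp hy)
        exact add_le_add (hlb u a ha) (hlb v b hb)
    have key : ∀ u v x y : V, G.Adj u v → G.Adj x y →
        f u + f v = f x + f y → s(u, v) = s(x, y) := by
      intro u v x y huv hxy h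
      have h5 : 5 ^ idx u + 5 ^ idx v = 5 ^ idx x + 5 ^ idx y :=
        (hmin u v).unique (by rw [h]; exact hmin x y)
      have hiu : idx u ≠ idx v := fun hh => huv.ne (hidx_inj hh)
      have hix : idx x ≠ idx y := fun hh => hxy.ne (hidx_inj hh)
      rcases aux_pow_pair hiu hix h5 with ⟨h1, h2⟩ | ⟨h1, h2⟩
      · rw [hidx_inj h1, hidx_inj h2]
      · rw [hidx_inj h1, hidx_inj h2]
        exact Sym2.eq_swap
    have hwf : IsWeakIASI G f := by
      constructor
      · exact fun v => ⟨_, hmem v⟩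
      · exact hf_inj
      · intro e1 he1 e2 he2 h
        revert he1 he2 h
        refine Sym2.inductionOn₂ e1 e2 (fun u v x y he1 he2 h => ?_)
        exact key u v x y ((G.mem_edgeSet).mp he1) ((G.mem_edgeSet).mp he2) h
      · intro u v huv
        have h1 : 1 ≤ (f v).card := Finset.card_pos.mpr ⟨_, hmem v⟩
        have h2 : 1 ≤ (f u).card := Finset.card_pos.mpr ⟨_, hmem u⟩
        have hEL : edgeLabel f s(u, v) = f u + f v := rfl
        rcases hS huv with hu | hv
        · have hfu : f u = {5 ^ idx u} := by simp [hf, hu]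
          rw [hEL, hfu, aux_card_singleton_add, Finset.card_singleton]
          omega
        · have hfv : f v = {5 ^ idx v} := by simp [hf, hv]
          rw [hEL, hfv, add_comm (f u), aux_card_singleton_add, Finset.card_singleton]
          omega
    have hmonoset : {v : V | (f v).card = 1} = S := by
      ext v
      by_cases h : v ∈ S
      · simp [hf, h]
      · have hp : (5:ℕ) ^ idx v ≠ 2 * 5 ^ idx v := by
          have := hpos (idx v); omega
        simp [hf, h, Finset.card_pair hp]
    apply Nat.sInf_le
    exact ⟨f, hwf, by unfold monoVertexCount; rw [hmonoset, hScard]⟩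
  · apply le_csInf
    · obtain ⟨f, hf⟩ := hG
      exact ⟨_, f, hf, rfl⟩
    · rintro n ⟨f, hf, rfl⟩
      apply Nat.sInf_le
      refine ⟨{v | (f v).card = 1}, ?_, rfl⟩
      intro u v huv
      by_contra hcon
      push_neg at hcon
      obtain ⟨h1, h2⟩ := hcon
      simp only [Set.mem_setOf_eq] at h1 h2
      have hu1 : 1 ≤ (f u).card := Finset.card_pos.mpr (hf.nonempty u)
      have hv1 : 1 ≤ (f v).card := Finset.card_pos.mpr (hf.nonempty v)
      have hu2 : 2 ≤ (f u).card := by omega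
      have hv2 : 2 ≤ (f v).card := by omega
      have hw := hf.weak u v huv
      have hEL : edgeLabel f s(u, v) = f u + f v := rfl
      rw [hEL] at hw
      have c1 := aux_card_lt_card_add (hf.nonempty u) hv2
      have c2 := aux_card_lt_card_add (hf.nonempty v) hu2
      rw [add_comm] at c2
      omega
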